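/- arXiv:2104.00838 — 4 statements merged into one kernel-verified Lean document; each statement's English description precedes it below -/
import Mathlib

section
/- Let n ≥ 3, let a, b ≥ 1 be natural numbers, and set m = (a+1)(b+1) - 1 = ab + a + b. Let L_n(a,b) be the n×n matrix whose upper-left 3×3 block is L_3(a,b) = [[ab+b-1, a, 1], [a, ab, b], [1, b, ab+a-1]], whose remaining diagonal entries (positions (4,4) through (n,n)) all equal m, and whose other entries are 0. Then C_{L_n(a,b)} = (-1)^{a+b+1} · m!/((ab-1)!·0!·0!·a!·b!·1!) + (-1)^{a+b} · m!/((ab)!·1!·1!·(a-1)!·(b-1)!·0!). -/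
/-- The coefficient `C_L` of the monomial `x^L = ∏ x_{ij}^{l_{ij}}` in `(det X)^m`,
where `X` is the `n × n` matrix of indeterminates `x_{ij}`. -/
noncomputable def coeffC (n m : ℕ) (L : Matrix (Fin n) (Fin n) ℕ) : ℤ :=
  MvPolynomial.coeff
    (Finsupp.equivFunOnFinite.symm fun p : Fin n × Fin n => L p.1 p.2)
    ((Matrix.det (Matrix.of fun i j : Fin n =>
      (MvPolynomial.X (i, j) : MvPolynomial (Fin n × Fin n) ℤ))) ^ m)

/-- The 3×3 matrix `L_3(a,b)`. -/
def L3 (a b : ℕ) : Matrix (Fin 3) (Fin 3) ℕ :=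
  !![a * b + b - 1, a, 1;
     a, a * b, b;
     1, b, a * b + a - 1]

/-- The n×n matrix `L_n(a,b)`: upper-left 3×3 block `L_3(a,b)`, remaining diagonal
entries equal to `m = ab + a + b`, and all other entries `0`. -/
def Lmat (n a b : ℕ) : Matrix (Fin n) (Fin n) ℕ := fun i j =>
  if h : (i : ℕ) < 3 ∧ (j : ℕ) < 3 then L3 a b ⟨i, h.1⟩ ⟨j, h.2⟩
  else if i = j then a * b + a + b else 0

open MvPolynomial Equiv Finset

namespace CLaux

noncomputable def Emat (σ : Equiv.Perm (Fin n)) : (Fin n × Fin n) →₀ ℕ :=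
  ∑ j, Finsupp.single (σ j, j) 1

lemma prod_monomial {ι : Type*} (s : Finset ι) (d : ι → ((Fin n × Fin n) →₀ ℕ))
    (c : ι → ℤ) :
    ∏ i ∈ s, (monomial (d i) (c i) : MvPolynomial (Fin n × Fin n) ℤ)
      = monomial (∑ i ∈ s, d i) (∏ i ∈ s, c i) := by
  classical
  induction s using Finset.cons_induction with
  | empty => simp [MvPolynomial.monomial_eq]
  | cons a s ha ih =>
    rw [Finset.prod_cons, Finset.sum_cons, Finset.prod_cons, ih, MvPolynomial.monomial_mul]

lemma det_X_eq :
    (Matrix.det (Matrix.of fun i j : Fin n =>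
      (MvPolynomial.X (i, j) : MvPolynomial (Fin n × Fin n) ℤ)))
      = ∑ σ : Equiv.Perm (Fin n), monomial (Emat σ) ((Equiv.Perm.sign σ : ℤ)) := by
  rw [Matrix.det_apply]
  refine Finset.sum_congr rfl fun σ _ => ?_
  have : ∏ i, (Matrix.of fun i j : Fin n =>
      (MvPolynomial.X (i, j) : MvPolynomial (Fin n × Fin n) ℤ)) (σ i) i
      = monomial (Emat σ) 1 := by
    rw [Emat]
    rw [show (∏ i, (Matrix.of fun i j : Fin n =>
      (MvPolynomial.X (i, j) : MvPolynomial (Fin n × Fin n) ℤ)) (σ i) i)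
      = ∏ i, monomial (Finsupp.single (σ i, i) 1) (1:ℤ) from
        Finset.prod_congr rfl fun i _ => rfl]
    rw [prod_monomial]
    simp
  rw [this, Units.smul_def, zsmul_eq_mul]
  rw [show ((Equiv.Perm.sign σ : ℤ) : MvPolynomial (Fin n × Fin n) ℤ) = C ((Equiv.Perm.sign σ : ℤ)) by simp]
  rw [C_mul_monomial, mul_one]

lemma coeffC_eq (m : ℕ) (L : Matrix (Fin n) (Fin n) ℕ) :
    coeffC n m L = ∑ k ∈ piAntidiag (univ : Finset (Equiv.Perm (Fin n))) m,
      if (∑ σ, k σ • Emat σ) = Finsupp.equivFunOnFinite.symm (fun p : Fin n × Fin n => L p.1 p.2)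
      then (Nat.multinomial univ k : ℤ) * ∏ σ, ((Equiv.Perm.sign σ : ℤ)) ^ k σ else 0 := by
  classical
  rw [coeffC, det_X_eq, Finset.sum_pow_eq_sum_piAntidiag, MvPolynomial.coeff_sum]
  refine Finset.sum_congr rfl fun k _ => ?_
  have h1 : ∏ σ : Equiv.Perm (Fin n),
      (monomial (Emat σ) ((Equiv.Perm.sign σ : ℤ)) : MvPolynomial (Fin n × Fin n) ℤ) ^ k σ
      = monomial (∑ σ, k σ • Emat σ) (∏ σ, ((Equiv.Perm.sign σ : ℤ)) ^ k σ) := by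
    rw [← prod_monomial]
    exact Finset.prod_congr rfl fun σ _ => by rw [MvPolynomial.monomial_pow]
  rw [h1]
  rw [show ((Nat.multinomial univ k : ℕ) : MvPolynomial (Fin n × Fin n) ℤ)
      = C ((Nat.multinomial univ k : ℤ)) from (map_natCast C _).symm]
  rw [C_mul_monomial, MvPolynomial.coeff_monomial]


variable {n : ℕ}
def q0 (hn : 3 ≤ n) : Fin n := ⟨0, by omega⟩
def q1 (hn : 3 ≤ n) : Fin n := ⟨1, by omega⟩
def q2 (hn : 3 ≤ n) : Fin n := ⟨2, by omega⟩
variable (hn : 3 ≤ n)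
lemma q01 : q0 hn ≠ q1 hn := by simp [q0, q1, Fin.ext_iff]
lemma q02 : q0 hn ≠ q2 hn := by simp [q0, q1, q2, Fin.ext_iff]
lemma q12 : q1 hn ≠ q2 hn := by simp [q1, q2, Fin.ext_iff]
def s01 : Equiv.Perm (Fin n) := Equiv.swap (q0 hn) (q1 hn)
def s02 : Equiv.Perm (Fin n) := Equiv.swap (q0 hn) (q2 hn)
def s12 : Equiv.Perm (Fin n) := Equiv.swap (q1 hn) (q2 hn)
def c0 : Equiv.Perm (Fin n) := s01 hn * s12 hn
def c1 : Equiv.Perm (Fin n) := s12 hn * s01 hn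
lemma s01_0 : s01 hn (q0 hn) = q1 hn := Equiv.swap_apply_left _ _
lemma s01_1 : s01 hn (q1 hn) = q0 hn := Equiv.swap_apply_right _ _
lemma s01_2 : s01 hn (q2 hn) = q2 hn :=
  Equiv.swap_apply_of_ne_of_ne (Ne.symm (q02 hn)) (Ne.symm (q12 hn))
lemma s02_0 : s02 hn (q0 hn) = q2 hn := Equiv.swap_apply_left _ _
lemma s02_1 : s02 hn (q1 hn) = q1 hn :=
  Equiv.swap_apply_of_ne_of_ne (Ne.symm (q01 hn)) (q12 hn)
lemma s02_2 : s02 hn (q2 hn) = q0 hn := Equiv.swap_apply_right _ _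
lemma s12_0 : s12 hn (q0 hn) = q0 hn :=
  Equiv.swap_apply_of_ne_of_ne (q01 hn) (q02 hn)
lemma s12_1 : s12 hn (q1 hn) = q2 hn := Equiv.swap_apply_left _ _
lemma s12_2 : s12 hn (q2 hn) = q1 hn := Equiv.swap_apply_right _ _
lemma c0_0 : c0 hn (q0 hn) = q1 hn := by rw [c0, Equiv.Perm.mul_apply, s12_0, s01_0]
lemma c0_1 : c0 hn (q1 hn) = q2 hn := by rw [c0, Equiv.Perm.mul_apply, s12_1, s01_2]
lemma c0_2 : c0 hn (q2 hn) = q0 hn := by rw [c0, Equiv.Perm.mul_apply, s12_2, s01_1]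
lemma c1_0 : c1 hn (q0 hn) = q2 hn := by rw [c1, Equiv.Perm.mul_apply, s01_0, s12_1]
lemma c1_1 : c1 hn (q1 hn) = q0 hn := by rw [c1, Equiv.Perm.mul_apply, s01_1, s12_0]
lemma c1_2 : c1 hn (q2 hn) = q1 hn := by rw [c1, Equiv.Perm.mul_apply, s01_2, s12_2]
lemma one_0 : (1 : Equiv.Perm (Fin n)) (q0 hn) = q0 hn := rfl
lemma one_1 : (1 : Equiv.Perm (Fin n)) (q1 hn) = q1 hn := rfl
lemma one_2 : (1 : Equiv.Perm (Fin n)) (q2 hn) = q2 hn := rfl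
lemma fix_hi (x : Fin n) (hx : 3 ≤ (x : ℕ)) :
    s01 hn x = x ∧ s02 hn x = x ∧ s12 hn x = x ∧ c0 hn x = x ∧ c1 hn x = x := by
  have h0 : x ≠ q0 hn := by simp [q0, Fin.ext_iff]; omega
  have h1 : x ≠ q1 hn := by simp [q1, Fin.ext_iff]; omega
  have h2 : x ≠ q2 hn := by simp [q2, Fin.ext_iff]; omega
  have hs01 : s01 hn x = x := Equiv.swap_apply_of_ne_of_ne h0 h1
  have hs02 : s02 hn x = x := Equiv.swap_apply_of_ne_of_ne h0 h2
  have hs12 : s12 hn x = x := Equiv.swap_apply_of_ne_of_ne h1 h2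
  exact ⟨hs01, hs02, hs12, by rw [c0, Equiv.Perm.mul_apply, hs12, hs01],
    by rw [c1, Equiv.Perm.mul_apply, hs01, hs12]⟩

lemma q0v : ((q0 hn : Fin n) : ℕ) = 0 := rfl
lemma q1v : ((q1 hn : Fin n) : ℕ) = 1 := rfl
lemma q2v : ((q2 hn : Fin n) : ℕ) = 2 := rfl

lemma lt3 (x : Fin n) (hx : (x:ℕ) < 3) : x = q0 hn ∨ x = q1 hn ∨ x = q2 hn := by
  have hx' : (x:ℕ) = 0 ∨ (x:ℕ) = 1 ∨ (x:ℕ) = 2 := by omega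
  rcases hx' with h|h|h
  · exact Or.inl (Fin.ext (by simpa [q0] using h))
  · exact Or.inr (Or.inl (Fin.ext (by simpa [q1] using h)))
  · exact Or.inr (Or.inr (Fin.ext (by simpa [q2] using h)))

lemma eq_of_three (σ τ : Equiv.Perm (Fin n)) (hσ : ∀ j : Fin n, 3 ≤ (j:ℕ) → σ j = j)
    (hτ : ∀ j : Fin n, 3 ≤ (j:ℕ) → τ j = j)
    (h0 : σ (q0 hn) = τ (q0 hn)) (h1 : σ (q1 hn) = τ (q1 hn))
    (h2 : σ (q2 hn) = τ (q2 hn)) : σ = τ := by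
  apply Equiv.ext
  intro x
  by_cases hx : (x:ℕ) < 3
  · rcases lt3 hn x hx with rfl|rfl|rfl <;> assumption
  · rw [hσ x (by omega), hτ x (by omega)]

lemma classify (σ : Equiv.Perm (Fin n)) (h3 : ∀ j : Fin n, 3 ≤ (j:ℕ) → σ j = j) :
    σ = 1 ∨ σ = s01 hn ∨ σ = s02 hn ∨ σ = s12 hn ∨ σ = c0 hn ∨ σ = c1 hn := by
  have himg : ∀ x : Fin n, (x:ℕ) < 3 → ((σ x : Fin n) : ℕ) < 3 := by
    intro x hx
    by_contra hc
    have := h3 (σ x) (by omega)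
    have := σ.injective this
    omega
  have e0 := lt3 hn _ (himg (q0 hn) (by rw [q0v hn]; omega))
  have e1 := lt3 hn _ (himg (q1 hn) (by rw [q1v hn]; omega))
  have e2 := lt3 hn _ (himg (q2 hn) (by rw [q2v hn]; omega))
  have fixone : ∀ j : Fin n, 3 ≤ (j:ℕ) → (1 : Equiv.Perm (Fin n)) j = j := fun _ _ => rfl
  rcases e0 with h0|h0|h0 <;> rcases e1 with h1|h1|h1 <;> rcases e2 with h2|h2|h2 <;>
    [skip; skip; skip; skip; skip; skip; skip; skip; skip; skip; skip; skip; skip; skip;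
     skip; skip; skip; skip; skip; skip; skip; skip; skip; skip; skip; skip; skip] <;>
  first
  | exact absurd (σ.injective (h0.trans h1.symm)) (q01 hn)
  | exact absurd (σ.injective (h1.trans h0.symm)) (Ne.symm (q01 hn))
  | exact absurd (σ.injective (h0.trans h2.symm)) (q02 hn)
  | exact absurd (σ.injective (h2.trans h0.symm)) (Ne.symm (q02 hn))
  | exact absurd (σ.injective (h1.trans h2.symm)) (q12 hn)
  | exact absurd (σ.injective (h2.trans h1.symm)) (Ne.symm (q12 hn))
  | exact Or.inl (eq_of_three hn σ 1 h3 fixone (h0.trans (one_0 hn).symm)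
      (h1.trans (one_1 hn).symm) (h2.trans (one_2 hn).symm))
  | exact Or.inr (Or.inl (eq_of_three hn σ _ h3 (fun j hj => (fix_hi hn j hj).1)
      (h0.trans (s01_0 hn).symm) (h1.trans (s01_1 hn).symm) (h2.trans (s01_2 hn).symm)))
  | exact Or.inr (Or.inr (Or.inl (eq_of_three hn σ _ h3 (fun j hj => (fix_hi hn j hj).2.1)
      (h0.trans (s02_0 hn).symm) (h1.trans (s02_1 hn).symm) (h2.trans (s02_2 hn).symm))))
  | exact Or.inr (Or.inr (Or.inr (Or.inl (eq_of_three hn σ _ h3 (fun j hj => (fix_hi hn j hj).2.2.1)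
      (h0.trans (s12_0 hn).symm) (h1.trans (s12_1 hn).symm) (h2.trans (s12_2 hn).symm)))))
  | exact Or.inr (Or.inr (Or.inr (Or.inr (Or.inl (eq_of_three hn σ _ h3 (fun j hj => (fix_hi hn j hj).2.2.2.1)
      (h0.trans (c0_0 hn).symm) (h1.trans (c0_1 hn).symm) (h2.trans (c0_2 hn).symm))))))
  | exact Or.inr (Or.inr (Or.inr (Or.inr (Or.inr (eq_of_three hn σ _ h3 (fun j hj => (fix_hi hn j hj).2.2.2.2)
      (h0.trans (c1_0 hn).symm) (h1.trans (c1_1 hn).symm) (h2.trans (c1_2 hn).symm))))))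

lemma ne_of_apply {σ τ : Equiv.Perm (Fin n)} (x : Fin n) (h : σ x ≠ τ x) : σ ≠ τ :=
  fun he => h (by rw [he])

lemma one_apply (x : Fin n) : (1 : Equiv.Perm (Fin n)) x = x := rfl

lemma d_1_s01 : (1 : Equiv.Perm (Fin n)) ≠ s01 hn := ne_of_apply (q0 hn) (by rw [one_apply, s01_0]; exact q01 hn)
lemma d_1_s02 : (1 : Equiv.Perm (Fin n)) ≠ s02 hn := ne_of_apply (q0 hn) (by rw [one_apply, s02_0]; exact q02 hn)
lemma d_1_s12 : (1 : Equiv.Perm (Fin n)) ≠ s12 hn := ne_of_apply (q1 hn) (by rw [one_apply, s12_1]; exact q12 hn)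
lemma d_1_c0 : (1 : Equiv.Perm (Fin n)) ≠ c0 hn := ne_of_apply (q0 hn) (by rw [one_apply, c0_0]; exact q01 hn)
lemma d_1_c1 : (1 : Equiv.Perm (Fin n)) ≠ c1 hn := ne_of_apply (q0 hn) (by rw [one_apply, c1_0]; exact q02 hn)
lemma d_s01_s02 : s01 hn ≠ s02 hn := ne_of_apply (q0 hn) (by rw [s01_0, s02_0]; exact q12 hn)
lemma d_s01_s12 : s01 hn ≠ s12 hn := ne_of_apply (q0 hn) (by rw [s01_0, s12_0]; exact (q01 hn).symm)
lemma d_s01_c0 : s01 hn ≠ c0 hn := ne_of_apply (q1 hn) (by rw [s01_1, c0_1]; exact q02 hn)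
lemma d_s01_c1 : s01 hn ≠ c1 hn := ne_of_apply (q0 hn) (by rw [s01_0, c1_0]; exact q12 hn)
lemma d_s02_s12 : s02 hn ≠ s12 hn := ne_of_apply (q0 hn) (by rw [s02_0, s12_0]; exact (q02 hn).symm)
lemma d_s02_c0 : s02 hn ≠ c0 hn := ne_of_apply (q0 hn) (by rw [s02_0, c0_0]; exact (q12 hn).symm)
lemma d_s02_c1 : s02 hn ≠ c1 hn := ne_of_apply (q1 hn) (by rw [s02_1, c1_1]; exact (q01 hn).symm)
lemma d_s12_c0 : s12 hn ≠ c0 hn := ne_of_apply (q0 hn) (by rw [s12_0, c0_0]; exact q01 hn)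
lemma d_s12_c1 : s12 hn ≠ c1 hn := ne_of_apply (q0 hn) (by rw [s12_0, c1_0]; exact q02 hn)
lemma d_c0_c1 : c0 hn ≠ c1 hn := ne_of_apply (q0 hn) (by rw [c0_0, c1_0]; exact q12 hn)

lemma sign_s01 : Equiv.Perm.sign (s01 hn) = -1 := Equiv.Perm.sign_swap (q01 hn)
lemma sign_s02 : Equiv.Perm.sign (s02 hn) = -1 := Equiv.Perm.sign_swap (q02 hn)
lemma sign_s12 : Equiv.Perm.sign (s12 hn) = -1 := Equiv.Perm.sign_swap (q12 hn)
lemma sign_c0 : Equiv.Perm.sign (c0 hn) = 1 := by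
  rw [c0, map_mul, sign_s01, sign_s12]; rfl
lemma sign_c1 : Equiv.Perm.sign (c1 hn) = 1 := by
  rw [c1, map_mul, sign_s01, sign_s12]; rfl


noncomputable def S6 (hn : 3 ≤ n) : Finset (Equiv.Perm (Fin n)) :=
  {1, s01 hn, s02 hn, s12 hn, c0 hn, c1 hn}

lemma sum_six {M : Type*} [AddCommMonoid M] (g : Equiv.Perm (Fin n) → M)
    (hg : ∀ σ, σ ∉ S6 hn → g σ = 0) :
    ∑ σ, g σ = g 1 + g (s01 hn) + g (s02 hn) + g (s12 hn) + g (c0 hn) + g (c1 hn) := by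
  classical
  rw [← Finset.sum_subset (Finset.subset_univ (S6 hn)) (fun x _ hx => hg x hx)]
  rw [S6]
  rw [Finset.sum_insert (by
    simp [d_1_s01 hn, d_1_s02 hn, d_1_s12 hn, d_1_c0 hn, d_1_c1 hn])]
  rw [Finset.sum_insert (by
    simp [d_s01_s02 hn, d_s01_s12 hn, d_s01_c0 hn, d_s01_c1 hn])]
  rw [Finset.sum_insert (by simp [d_s02_s12 hn, d_s02_c0 hn, d_s02_c1 hn])]
  rw [Finset.sum_insert (by simp [d_s12_c0 hn, d_s12_c1 hn])]
  rw [Finset.sum_insert (by simp [d_c0_c1 hn])]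
  rw [Finset.sum_singleton]
  simp only [add_assoc]

lemma prod_six {M : Type*} [CommMonoid M] (g : Equiv.Perm (Fin n) → M)
    (hg : ∀ σ, σ ∉ S6 hn → g σ = 1) :
    ∏ σ, g σ = g 1 * g (s01 hn) * g (s02 hn) * g (s12 hn) * g (c0 hn) * g (c1 hn) := by
  classical
  rw [← Finset.prod_subset (Finset.subset_univ (S6 hn)) (fun x _ hx => hg x hx)]
  rw [S6]
  rw [Finset.prod_insert (by
    simp [d_1_s01 hn, d_1_s02 hn, d_1_s12 hn, d_1_c0 hn, d_1_c1 hn])]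
  rw [Finset.prod_insert (by
    simp [d_s01_s02 hn, d_s01_s12 hn, d_s01_c0 hn, d_s01_c1 hn])]
  rw [Finset.prod_insert (by simp [d_s02_s12 hn, d_s02_c0 hn, d_s02_c1 hn])]
  rw [Finset.prod_insert (by simp [d_s12_c0 hn, d_s12_c1 hn])]
  rw [Finset.prod_insert (by simp [d_c0_c1 hn])]
  rw [Finset.prod_singleton]
  simp only [mul_assoc]

lemma Emat_apply (σ : Equiv.Perm (Fin n)) (i j : Fin n) :
    Emat σ (i, j) = if σ j = i then 1 else 0 := by
  classical
  rw [Emat, Finsupp.finset_sum_apply]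
  rw [Finset.sum_eq_single j]
  · simp [Finsupp.single_apply, Prod.ext_iff]
  · intro x _ hx
    simp [Finsupp.single_apply, Prod.ext_iff, hx]
  · simp

lemma D_apply (k : Equiv.Perm (Fin n) → ℕ) (i j : Fin n) :
    (∑ σ, k σ • Emat σ) (i, j) = ∑ σ, k σ * (if σ j = i then 1 else 0) := by
  classical
  rw [Finsupp.finset_sum_apply]
  exact Finset.sum_congr rfl fun σ _ => by rw [Finsupp.smul_apply, Emat_apply, smul_eq_mul]

variable (a b : ℕ)

noncomputable def Lf (n a b : ℕ) : (Fin n × Fin n) →₀ ℕ :=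
  Finsupp.equivFunOnFinite.symm fun p : Fin n × Fin n => Lmat n a b p.1 p.2

lemma L_00 : Lmat n a b (q0 hn) (q0 hn) = a*b + b - 1 := by
  rw [Lmat, dif_pos ⟨by rw [q0v hn]; omega, by rw [q0v hn]; omega⟩]; norm_num [L3, q0]
lemma L_01 : Lmat n a b (q0 hn) (q1 hn) = a := by
  rw [Lmat, dif_pos ⟨by rw [q0v hn]; omega, by rw [q1v hn]; omega⟩]; norm_num [L3, q0, q1]
lemma L_02 : Lmat n a b (q0 hn) (q2 hn) = 1 := by
  rw [Lmat, dif_pos ⟨by rw [q0v hn]; omega, by rw [q2v hn]; omega⟩]; norm_num [L3, q0, q2]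
lemma L_10 : Lmat n a b (q1 hn) (q0 hn) = a := by
  rw [Lmat, dif_pos ⟨by rw [q1v hn]; omega, by rw [q0v hn]; omega⟩]; norm_num [L3, q1, q0]
lemma L_11 : Lmat n a b (q1 hn) (q1 hn) = a*b := by
  rw [Lmat, dif_pos ⟨by rw [q1v hn]; omega, by rw [q1v hn]; omega⟩]; norm_num [L3, q1]
lemma L_12 : Lmat n a b (q1 hn) (q2 hn) = b := by
  rw [Lmat, dif_pos ⟨by rw [q1v hn]; omega, by rw [q2v hn]; omega⟩]; norm_num [L3, q1, q2]
lemma L_20 : Lmat n a b (q2 hn) (q0 hn) = 1 := by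
  rw [Lmat, dif_pos ⟨by rw [q2v hn]; omega, by rw [q0v hn]; omega⟩]; norm_num [L3, q2, q0]
lemma L_21 : Lmat n a b (q2 hn) (q1 hn) = b := by
  rw [Lmat, dif_pos ⟨by rw [q2v hn]; omega, by rw [q1v hn]; omega⟩]; norm_num [L3, q2, q1]
lemma L_22 : Lmat n a b (q2 hn) (q2 hn) = a*b + a - 1 := by
  rw [Lmat, dif_pos ⟨by rw [q2v hn]; omega, by rw [q2v hn]; omega⟩]; norm_num [L3, q2]

lemma L_diag_hi (i : Fin n) (hi : 3 ≤ (i:ℕ)) : Lmat n a b i i = a*b + a + b := by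
  rw [Lmat, dif_neg (by omega), if_pos rfl]

lemma L_off (i j : Fin n) (h : i ≠ j) (h2 : ¬((i:ℕ) < 3 ∧ (j:ℕ) < 3)) :
    Lmat n a b i j = 0 := by
  rw [Lmat, dif_neg h2, if_neg h]

lemma master (k : Equiv.Perm (Fin n) → ℕ)
    (hk : ∀ σ, σ ∉ S6 hn → k σ = 0)
    (hsum : ∑ σ : Equiv.Perm (Fin n), k σ = a*b + a + b) :
    (∑ σ, k σ • Emat σ) = Lf n a b ↔
      (k 1 + k (s12 hn) = a*b + b - 1 ∧ k (s01 hn) + k (c0 hn) = a ∧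
       k (s02 hn) + k (c1 hn) = 1 ∧ k (s01 hn) + k (c1 hn) = a ∧
       k 1 + k (s02 hn) = a*b ∧ k (s12 hn) + k (c0 hn) = b ∧
       k (s02 hn) + k (c0 hn) = 1 ∧ k (s12 hn) + k (c1 hn) = b ∧
       k 1 + k (s01 hn) = a*b + a - 1) := by
  classical
  have hsum6 : k 1 + k (s01 hn) + k (s02 hn) + k (s12 hn) + k (c0 hn) + k (c1 hn)
      = a*b + a + b := by rw [← sum_six hn k hk]; exact hsum
  have hS : ∀ i j : Fin n, (∑ σ, k σ • Emat σ) (i, j)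
      = k 1 * (if (1 : Equiv.Perm (Fin n)) j = i then 1 else 0)
        + k (s01 hn) * (if s01 hn j = i then 1 else 0)
        + k (s02 hn) * (if s02 hn j = i then 1 else 0)
        + k (s12 hn) * (if s12 hn j = i then 1 else 0)
        + k (c0 hn) * (if c0 hn j = i then 1 else 0)
        + k (c1 hn) * (if c1 hn j = i then 1 else 0) := by
    intro i j
    rw [D_apply]
    exact sum_six hn _ (fun σ hσ => by rw [hk σ hσ, zero_mul])
  have hext : ((∑ σ, k σ • Emat σ) = Lf n a b)
      ↔ ∀ p : Fin n × Fin n, (∑ σ, k σ • Emat σ) p = Lmat n a b p.1 p.2 := by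
    rw [Finsupp.ext_iff]
    refine forall_congr' fun p => ?_
    rw [Lf]
    simp
  rw [hext]
  constructor
  · intro h
    have h00 := h (q0 hn, q0 hn); have h10 := h (q1 hn, q0 hn); have h20 := h (q2 hn, q0 hn)
    have h01 := h (q0 hn, q1 hn); have h11 := h (q1 hn, q1 hn); have h21 := h (q2 hn, q1 hn)
    have h02 := h (q0 hn, q2 hn); have h12 := h (q1 hn, q2 hn); have h22 := h (q2 hn, q2 hn)
    simp only [hS] at h00 h10 h20 h01 h11 h21 h02 h12 h22
    rw [L_00 hn] at h00; rw [L_10 hn] at h10; rw [L_20 hn] at h20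
    rw [L_01 hn] at h01; rw [L_11 hn] at h11; rw [L_21 hn] at h21
    rw [L_02 hn] at h02; rw [L_12 hn] at h12; rw [L_22 hn] at h22
    simp only [Equiv.Perm.one_apply, s01_0 hn, s01_1 hn, s01_2 hn, s02_0 hn, s02_1 hn,
      s02_2 hn, s12_0 hn, s12_1 hn, s12_2 hn, c0_0 hn, c0_1 hn, c0_2 hn, c1_0 hn,
      c1_1 hn, c1_2 hn, if_pos rfl, q01 hn, q02 hn, q12 hn, (q01 hn).symm, (q02 hn).symm,
      (q12 hn).symm, if_neg, mul_one, mul_zero, add_zero, zero_add, if_true, if_false,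
      eq_self_iff_true, ne_eq, not_false_iff]
      at h00 h10 h20 h01 h11 h21 h02 h12 h22
    exact ⟨h00, h10, h20, h01, h11, h21, h02, h12, h22⟩
  · rintro ⟨e1, e2, e3, e4, e5, e6, e7, e8, e9⟩
    rintro ⟨i, j⟩
    rw [hS]
    by_cases hj : (j : ℕ) < 3
    · by_cases hi : (i : ℕ) < 3
      · rcases lt3 hn i hi with rfl | rfl | rfl <;> rcases lt3 hn j hj with rfl | rfl | rfl <;>
          simp only [Equiv.Perm.one_apply, s01_0 hn, s01_1 hn, s01_2 hn, s02_0 hn, s02_1 hn,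
            s02_2 hn, s12_0 hn, s12_1 hn, s12_2 hn, c0_0 hn, c0_1 hn, c0_2 hn, c1_0 hn,
            c1_1 hn, c1_2 hn, q01 hn, q02 hn, q12 hn, (q01 hn).symm, (q02 hn).symm,
            (q12 hn).symm, if_pos rfl, if_neg, mul_one, mul_zero, add_zero, zero_add,
            if_true, if_false, eq_self_iff_true, ne_eq, not_false_iff] <;>
          [rw [L_00 hn]; rw [L_01 hn]; rw [L_02 hn]; rw [L_10 hn]; rw [L_11 hn];
           rw [L_12 hn]; rw [L_20 hn]; rw [L_21 hn]; rw [L_22 hn]] <;>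
          first
            | exact e1 | exact e2 | exact e3 | exact e4 | exact e5 | exact e6
            | exact e7 | exact e8 | exact e9
      · have hne0 : ¬ (q0 hn = i) := fun h => by rw [← h, q0v hn] at hi; omega
        have hne1 : ¬ (q1 hn = i) := fun h => by rw [← h, q1v hn] at hi; omega
        have hne2 : ¬ (q2 hn = i) := fun h => by rw [← h, q2v hn] at hi; omega
        have hij : i ≠ j := fun h => by rw [h] at hi; omega
        rw [L_off a b i j hij (by omega)]
        rcases lt3 hn j hj with rfl | rfl | rfl <;>
          simp only [Equiv.Perm.one_apply, s01_0 hn, s01_1 hn, s01_2 hn, s02_0 hn, s02_1 hn,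
            s02_2 hn, s12_0 hn, s12_1 hn, s12_2 hn, c0_0 hn, c0_1 hn, c0_2 hn, c1_0 hn,
            c1_1 hn, c1_2 hn, hne0, hne1, hne2, if_false, mul_zero, add_zero, zero_add,
            if_neg]
    · obtain ⟨f1, f2, f3, f4, f5⟩ := fix_hi hn j (by omega)
      rw [Equiv.Perm.one_apply, f1, f2, f3, f4, f5]
      by_cases hij : j = i
      · subst hij
        rw [L_diag_hi a b j (by omega)]
        simp only [eq_self_iff_true, if_true, mul_one]
        exact hsum6
      · rw [L_off a b i j (fun h => hij h.symm) (by omega)]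
        simp [hij]

def k0f (hn : 3 ≤ n) (a b : ℕ) : Equiv.Perm (Fin n) → ℕ := fun σ =>
  if σ = 1 then a*b - 1 else if σ = s01 hn then a else if σ = s02 hn then 1
  else if σ = s12 hn then b else 0

def k1f (hn : 3 ≤ n) (a b : ℕ) : Equiv.Perm (Fin n) → ℕ := fun σ =>
  if σ = 1 then a*b else if σ = s01 hn then a - 1 else if σ = s12 hn then b - 1
  else if σ = c0 hn then 1 else if σ = c1 hn then 1 else 0

lemma k0f_1 : k0f hn a b 1 = a*b - 1 := if_pos rfl
lemma k0f_s01 : k0f hn a b (s01 hn) = a := by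
  rw [k0f, if_neg (d_1_s01 hn).symm, if_pos rfl]
lemma k0f_s02 : k0f hn a b (s02 hn) = 1 := by
  rw [k0f, if_neg (d_1_s02 hn).symm, if_neg (d_s01_s02 hn).symm, if_pos rfl]
lemma k0f_s12 : k0f hn a b (s12 hn) = b := by
  rw [k0f, if_neg (d_1_s12 hn).symm, if_neg (d_s01_s12 hn).symm,
    if_neg (d_s02_s12 hn).symm, if_pos rfl]
lemma k0f_c0 : k0f hn a b (c0 hn) = 0 := by
  rw [k0f, if_neg (d_1_c0 hn).symm, if_neg (d_s01_c0 hn).symm,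
    if_neg (d_s02_c0 hn).symm, if_neg (d_s12_c0 hn).symm]
lemma k0f_c1 : k0f hn a b (c1 hn) = 0 := by
  rw [k0f, if_neg (d_1_c1 hn).symm, if_neg (d_s01_c1 hn).symm,
    if_neg (d_s02_c1 hn).symm, if_neg (d_s12_c1 hn).symm]
lemma k0f_off (σ : Equiv.Perm (Fin n)) (hσ : σ ∉ S6 hn) : k0f hn a b σ = 0 := by
  rw [S6] at hσ
  simp only [Finset.mem_insert, Finset.mem_singleton, not_or] at hσ
  obtain ⟨h1, h2, h3, h4, _, _⟩ := hσ
  rw [k0f, if_neg h1, if_neg h2, if_neg h3, if_neg h4]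

lemma k1f_1 : k1f hn a b 1 = a*b := if_pos rfl
lemma k1f_s01 : k1f hn a b (s01 hn) = a - 1 := by
  rw [k1f, if_neg (d_1_s01 hn).symm, if_pos rfl]
lemma k1f_s12 : k1f hn a b (s12 hn) = b - 1 := by
  rw [k1f, if_neg (d_1_s12 hn).symm, if_neg (d_s01_s12 hn).symm, if_pos rfl]
lemma k1f_s02 : k1f hn a b (s02 hn) = 0 := by
  rw [k1f, if_neg (d_1_s02 hn).symm, if_neg (d_s01_s02 hn).symm,
    if_neg (d_s02_s12 hn), if_neg (d_s02_c0 hn), if_neg (d_s02_c1 hn)]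
lemma k1f_c0 : k1f hn a b (c0 hn) = 1 := by
  rw [k1f, if_neg (d_1_c0 hn).symm, if_neg (d_s01_c0 hn).symm,
    if_neg (d_s12_c0 hn).symm, if_pos rfl]
lemma k1f_c1 : k1f hn a b (c1 hn) = 1 := by
  rw [k1f, if_neg (d_1_c1 hn).symm, if_neg (d_s01_c1 hn).symm,
    if_neg (d_s12_c1 hn).symm, if_neg (d_c0_c1 hn).symm, if_pos rfl]
lemma k1f_off (σ : Equiv.Perm (Fin n)) (hσ : σ ∉ S6 hn) : k1f hn a b σ = 0 := by
  rw [S6] at hσ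
  simp only [Finset.mem_insert, Finset.mem_singleton, not_or] at hσ
  obtain ⟨h1, h2, h3, h4, h5, h6⟩ := hσ
  rw [k1f, if_neg h1, if_neg h2, if_neg h4, if_neg h5, if_neg h6]

lemma support_S6 (k : Equiv.Perm (Fin n) → ℕ)
    (hcond : (∑ σ, k σ • Emat σ) = Lf n a b) :
    ∀ σ, σ ∉ S6 hn → k σ = 0 := by
  intro σ hσ
  by_contra hkσ
  have h3 : ∀ j : Fin n, 3 ≤ (j:ℕ) → σ j = j := by
    intro j hj
    by_contra hne
    have hL : Lmat n a b (σ j) j = 0 :=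
      L_off a b _ _ hne (fun h => by omega)
    have hh := congrArg (fun f : (Fin n × Fin n) →₀ ℕ => f (σ j, j)) hcond
    change (∑ σ, k σ • Emat σ) (σ j, j) = (Lf n a b) (σ j, j) at hh
    rw [D_apply] at hh
    have hLf : (Lf n a b) (σ j, j) = 0 := by rw [Lf]; simpa using hL
    rw [hLf] at hh
    have hterm := (Finset.sum_eq_zero_iff.mp hh) σ (Finset.mem_univ σ)
    rw [if_pos rfl, mul_one] at hterm
    exact hkσ hterm
  have hcls := classify hn σ h3
  apply hσ
  rw [S6]
  simp only [Finset.mem_insert, Finset.mem_singleton]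
  tauto

lemma ab_pos (ha : 1 ≤ a) (hb : 1 ≤ b) : 1 ≤ a * b :=
  Nat.one_le_iff_ne_zero.mpr (Nat.mul_ne_zero (by omega) (by omega))

lemma sum_k0f (ha : 1 ≤ a) (hb : 1 ≤ b) :
    ∑ σ : Equiv.Perm (Fin n), k0f hn a b σ = a*b + a + b := by
  rw [sum_six hn _ (k0f_off hn a b)]
  rw [k0f_1, k0f_s01, k0f_s02, k0f_s12, k0f_c0, k0f_c1]
  rcases Nat.exists_eq_add_of_le (ab_pos a b ha hb) with ⟨c, hc⟩
  rw [hc]; omega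

lemma sum_k1f (ha : 1 ≤ a) (hb : 1 ≤ b) :
    ∑ σ : Equiv.Perm (Fin n), k1f hn a b σ = a*b + a + b := by
  rw [sum_six hn _ (k1f_off hn a b)]
  rw [k1f_1, k1f_s01, k1f_s02, k1f_s12, k1f_c0, k1f_c1]
  omega

lemma cond_k0 (ha : 1 ≤ a) (hb : 1 ≤ b) :
    (∑ σ, k0f hn a b σ • Emat σ) = Lf n a b := by
  refine (master hn a b _ (k0f_off hn a b) (sum_k0f hn a b ha hb)).mpr ?_
  rcases Nat.exists_eq_add_of_le (ab_pos a b ha hb) with ⟨c, hc⟩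
  refine ⟨?_, ?_, ?_, ?_, ?_, ?_, ?_, ?_, ?_⟩ <;>
    simp only [k0f_1, k0f_s01, k0f_s02, k0f_s12, k0f_c0, k0f_c1, hc] <;> omega

lemma cond_k1 (ha : 1 ≤ a) (hb : 1 ≤ b) :
    (∑ σ, k1f hn a b σ • Emat σ) = Lf n a b := by
  refine (master hn a b _ (k1f_off hn a b) (sum_k1f hn a b ha hb)).mpr ?_
  rcases Nat.exists_eq_add_of_le (ab_pos a b ha hb) with ⟨c, hc⟩
  refine ⟨?_, ?_, ?_, ?_, ?_, ?_, ?_, ?_, ?_⟩ <;>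
    simp only [k1f_1, k1f_s01, k1f_s02, k1f_s12, k1f_c0, k1f_c1, hc] <;> omega

lemma k0f_ne_k1f : k0f hn a b ≠ k1f hn a b := by
  intro h
  have := congrFun h (s02 hn)
  rw [k0f_s02, k1f_s02] at this
  exact one_ne_zero this

lemma key (ha : 1 ≤ a) (hb : 1 ≤ b) (k : Equiv.Perm (Fin n) → ℕ)
    (hsum : ∑ σ : Equiv.Perm (Fin n), k σ = a*b + a + b)
    (hcond : (∑ σ, k σ • Emat σ) = Lf n a b) :
    k = k0f hn a b ∨ k = k1f hn a b := by
  have hsupp := support_S6 hn a b k hcond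
  obtain ⟨e1, e2, e3, e4, e5, e6, e7, e8, e9⟩ := (master hn a b k hsupp hsum).mp hcond
  rcases Nat.exists_eq_add_of_le (ab_pos a b ha hb) with ⟨c, hc⟩
  rw [hc] at e1 e5 e9
  have hvals : (k 1 = 1 + c - 1 ∧ k (s01 hn) = a ∧ k (s02 hn) = 1 ∧ k (s12 hn) = b ∧
        k (c0 hn) = 0 ∧ k (c1 hn) = 0)
      ∨ (k 1 = 1 + c ∧ k (s01 hn) = a - 1 ∧ k (s02 hn) = 0 ∧ k (s12 hn) = b - 1 ∧
        k (c0 hn) = 1 ∧ k (c1 hn) = 1) := by omega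
  rcases hvals with ⟨v1, v2, v3, v4, v5, v6⟩ | ⟨v1, v2, v3, v4, v5, v6⟩
  · left
    funext σ
    by_cases hσ : σ ∈ S6 hn
    · rw [S6] at hσ
      simp only [Finset.mem_insert, Finset.mem_singleton] at hσ
      rcases hσ with rfl | rfl | rfl | rfl | rfl | rfl <;>
        simp only [k0f_1, k0f_s01, k0f_s02, k0f_s12, k0f_c0, k0f_c1,
          v1, v2, v3, v4, v5, v6, hc] <;> omega
    · rw [hsupp σ hσ, k0f_off hn a b σ hσ]
  · right
    funext σ
    by_cases hσ : σ ∈ S6 hn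
    · rw [S6] at hσ
      simp only [Finset.mem_insert, Finset.mem_singleton] at hσ
      rcases hσ with rfl | rfl | rfl | rfl | rfl | rfl <;>
        simp only [k1f_1, k1f_s01, k1f_s02, k1f_s12, k1f_c0, k1f_c1,
          v1, v2, v3, v4, v5, v6, hc] <;> omega
    · rw [hsupp σ hσ, k1f_off hn a b σ hσ]

lemma sg_one : ((Equiv.Perm.sign (1 : Equiv.Perm (Fin n)) : ℤˣ) : ℤ) = 1 := by simp

lemma sg_s01 : ((Equiv.Perm.sign (s01 hn) : ℤˣ) : ℤ) = -1 := by rw [sign_s01]; rfl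
lemma sg_s02 : ((Equiv.Perm.sign (s02 hn) : ℤˣ) : ℤ) = -1 := by rw [sign_s02]; rfl
lemma sg_s12 : ((Equiv.Perm.sign (s12 hn) : ℤˣ) : ℤ) = -1 := by rw [sign_s12]; rfl
lemma sg_c0 : ((Equiv.Perm.sign (c0 hn) : ℤˣ) : ℤ) = 1 := by rw [sign_c0]; rfl
lemma sg_c1 : ((Equiv.Perm.sign (c1 hn) : ℤˣ) : ℤ) = 1 := by rw [sign_c1]; rfl

lemma P0 : ∏ σ : Equiv.Perm (Fin n), ((Equiv.Perm.sign σ : ℤˣ) : ℤ) ^ (k0f hn a b σ)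
    = (-1) ^ (a + b + 1) := by
  rw [prod_six hn _ (fun σ hσ => by rw [k0f_off hn a b σ hσ, pow_zero])]
  rw [k0f_1, k0f_s01, k0f_s02, k0f_s12, k0f_c0, k0f_c1,
    sg_one, sg_s01 hn, sg_s02 hn, sg_s12 hn, sg_c0 hn, sg_c1 hn]
  simp only [one_pow, pow_zero, mul_one, one_mul, pow_one]
  rw [pow_add, pow_add, pow_one]
  ring

lemma P1 (ha : 1 ≤ a) (hb : 1 ≤ b) :
    ∏ σ : Equiv.Perm (Fin n), ((Equiv.Perm.sign σ : ℤˣ) : ℤ) ^ (k1f hn a b σ)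
    = (-1) ^ (a + b) := by
  rw [prod_six hn _ (fun σ hσ => by rw [k1f_off hn a b σ hσ, pow_zero])]
  rw [k1f_1, k1f_s01, k1f_s02, k1f_s12, k1f_c0, k1f_c1,
    sg_one, sg_s01 hn, sg_s02 hn, sg_s12 hn, sg_c0 hn, sg_c1 hn]
  simp only [one_pow, pow_zero, mul_one, one_mul, pow_one]
  rw [← pow_add]
  have h2 : (a - 1) + (b - 1) + 2 = a + b := by omega
  rw [← h2, pow_add]
  ring

lemma prod_fact_k0 : ∏ σ : Equiv.Perm (Fin n), Nat.factorial (k0f hn a b σ)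
    = Nat.factorial (a*b - 1) * Nat.factorial a * Nat.factorial b := by
  rw [prod_six hn _ (fun σ hσ => by rw [k0f_off hn a b σ hσ]; rfl)]
  rw [k0f_1, k0f_s01, k0f_s02, k0f_s12, k0f_c0, k0f_c1]
  simp [Nat.factorial]

lemma prod_fact_k1 : ∏ σ : Equiv.Perm (Fin n), Nat.factorial (k1f hn a b σ)
    = Nat.factorial (a*b) * Nat.factorial (a - 1) * Nat.factorial (b - 1) := by
  rw [prod_six hn _ (fun σ hσ => by rw [k1f_off hn a b σ hσ]; rfl)]
  rw [k1f_1, k1f_s01, k1f_s02, k1f_s12, k1f_c0, k1f_c1]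
  simp [Nat.factorial]

end CLaux

open CLaux

theorem coeff_Lmat_eq_diff_of_multinomials (n a b : ℕ) (hn : 3 ≤ n)
    (ha : 1 ≤ a) (hb : 1 ≤ b) (m : ℕ) (hm : m = (a + 1) * (b + 1) - 1) :
    (coeffC n m (Lmat n a b) : ℚ)
      = (-1) ^ (a + b + 1) *
          (m.factorial : ℚ) /
            ((a * b - 1).factorial * (Nat.factorial 0) * (Nat.factorial 0) *
              a.factorial * b.factorial * (Nat.factorial 1))
        + (-1) ^ (a + b) *
          (m.factorial : ℚ) /
            ((a * b).factorial * (Nat.factorial 1) * (Nat.factorial 1) *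
              (a - 1).factorial * (b - 1).factorial * (Nat.factorial 0)) := by
  classical
  have hm' : m = a*b + a + b := by
    have h2 : (a+1)*(b+1) = a*b+a+b+1 := by ring
    omega
  subst hm'
  rw [coeffC_eq]
  have hmem0 : k0f hn a b ∈ Finset.piAntidiag (Finset.univ : Finset (Equiv.Perm (Fin n)))
      (a*b+a+b) := by
    rw [Finset.mem_piAntidiag]
    exact ⟨sum_k0f hn a b ha hb, fun i _ => Finset.mem_univ i⟩
  have hmem1 : k1f hn a b ∈ Finset.piAntidiag (Finset.univ : Finset (Equiv.Perm (Fin n)))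
      (a*b+a+b) := by
    rw [Finset.mem_piAntidiag]
    exact ⟨sum_k1f hn a b ha hb, fun i _ => Finset.mem_univ i⟩
  have hsub : ({k0f hn a b, k1f hn a b} : Finset (Equiv.Perm (Fin n) → ℕ))
      ⊆ Finset.piAntidiag Finset.univ (a*b+a+b) := by
    intro x hx
    rcases Finset.mem_insert.mp hx with rfl | hx
    · exact hmem0
    · rw [Finset.mem_singleton] at hx
      subst hx
      exact hmem1
  have hvan : ∀ x ∈ Finset.piAntidiag (Finset.univ : Finset (Equiv.Perm (Fin n))) (a*b+a+b),
      x ∉ ({k0f hn a b, k1f hn a b} : Finset (Equiv.Perm (Fin n) → ℕ)) →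
      (if (∑ σ, x σ • Emat σ)
          = Finsupp.equivFunOnFinite.symm (fun p : Fin n × Fin n => Lmat n a b p.1 p.2)
       then ((Nat.multinomial Finset.univ x : ℤ))
          * ∏ σ, ((Equiv.Perm.sign σ : ℤ)) ^ x σ else 0) = 0 := by
    intro x hx hnx
    rw [if_neg]
    intro hcond
    have hsum := (Finset.mem_piAntidiag.mp hx).1
    rcases key hn a b ha hb x hsum hcond with rfl | rfl
    · exact hnx (by simp)
    · exact hnx (by simp)
  rw [← Finset.sum_subset hsub hvan]
  rw [Finset.sum_pair (k0f_ne_k1f hn a b)]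
  rw [show (Finsupp.equivFunOnFinite.symm fun p : Fin n × Fin n => Lmat n a b p.1 p.2)
      = Lf n a b from rfl]
  rw [if_pos (cond_k0 hn a b ha hb), if_pos (cond_k1 hn a b ha hb)]
  rw [P0 hn a b, P1 hn a b ha hb]
  have hs0 := Nat.multinomial_spec (Finset.univ : Finset (Equiv.Perm (Fin n))) (k0f hn a b)
  rw [prod_fact_k0 hn a b, sum_k0f hn a b ha hb] at hs0
  have hs1 := Nat.multinomial_spec (Finset.univ : Finset (Equiv.Perm (Fin n))) (k1f hn a b)
  rw [prod_fact_k1 hn a b, sum_k1f hn a b ha hb] at hs1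
  have hq0 : ((Nat.multinomial Finset.univ (k0f hn a b) : ℕ) : ℚ)
      = (a*b+a+b).factorial / ((a*b-1).factorial * a.factorial * b.factorial) := by
    rw [eq_div_iff (by positivity)]
    rw [mul_comm]
    exact_mod_cast hs0
  have hq1 : ((Nat.multinomial Finset.univ (k1f hn a b) : ℕ) : ℚ)
      = (a*b+a+b).factorial / ((a*b).factorial * (a-1).factorial * (b-1).factorial) := by
    rw [eq_div_iff (by positivity)]
    rw [mul_comm]
    exact_mod_cast hs1
  push_cast
  rw [hq0, hq1]
  rw [Nat.factorial_zero, Nat.factorial_one]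
  push_cast
  ring
end

section
/- Let a, b ≥ 1 be natural numbers. Then the only 6-tuples (k₁,k₂,k₃,l₁,l₂,l₃) of nonnegative integers satisfying the nine equations k₁+l₂ = ab+b-1, k₂+l₁ = a, k₃+l₃ = 1, k₃+l₁ = a, k₁+l₃ = ab, k₂+l₂ = b, k₂+l₃ = 1, k₃+l₂ = b, k₁+l₁ = ab+a-1 are (k₁,k₂,k₃,l₁,l₂,l₃) = (ab-1, 0, 0, a, b, 1) and (k₁,k₂,k₃,l₁,l₂,l₃) = (ab, 1, 1, a-1, b-1, 0). -/
theorem solutions_of_linear_system (a b : ℕ) (ha : 1 ≤ a) (hb : 1 ≤ b)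
    (k₁ k₂ k₃ l₁ l₂ l₃ : ℕ) :
    (k₁ + l₂ = a * b + b - 1 ∧ k₂ + l₁ = a ∧ k₃ + l₃ = 1 ∧
     k₃ + l₁ = a ∧ k₁ + l₃ = a * b ∧ k₂ + l₂ = b ∧
     k₂ + l₃ = 1 ∧ k₃ + l₂ = b ∧ k₁ + l₁ = a * b + a - 1)
      ↔ ((k₁, k₂, k₃, l₁, l₂, l₃) = (a * b - 1, 0, 0, a, b, 1) ∨
         (k₁, k₂, k₃, l₁, l₂, l₃) = (a * b, 1, 1, a - 1, b - 1, 0)) := by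
  have h1 : a ≤ a * b := Nat.le_mul_of_pos_right a hb
  have h2 : b ≤ a * b := Nat.le_mul_of_pos_left b ha
  simp only [Prod.mk.injEq]
  omega
end

section
/- Let a, b ≥ 1 be natural numbers, set m = ab + a + b, and let L_3(a,b) = [[ab+b-1, a, 1], [a, ab, b], [1, b, ab+a-1]]. Then C_{L_3(a,b)} = 0, i.e., the coefficient of the monomial x^{L_3(a,b)} in the m-th power of the 3×3 determinant polynomial vanishes. -/
open MvPolynomial Finset

/-- Exponent vectors of the six terms of the 3×3 determinant. -/
noncomputable def Dvec : Fin 6 → ((Fin 3 × Fin 3) →₀ ℕ)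
| 0 => Finsupp.single (0,0) 1 + Finsupp.single (1,1) 1 + Finsupp.single (2,2) 1
| 1 => Finsupp.single (0,0) 1 + Finsupp.single (1,2) 1 + Finsupp.single (2,1) 1
| 2 => Finsupp.single (0,1) 1 + Finsupp.single (1,0) 1 + Finsupp.single (2,2) 1
| 3 => Finsupp.single (0,1) 1 + Finsupp.single (1,2) 1 + Finsupp.single (2,0) 1
| 4 => Finsupp.single (0,2) 1 + Finsupp.single (1,0) 1 + Finsupp.single (2,1) 1
| 5 => Finsupp.single (0,2) 1 + Finsupp.single (1,1) 1 + Finsupp.single (2,0) 1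

/-- Signs of the six terms of the 3×3 determinant. -/
def Evec : Fin 6 → ℤ
| 0 => 1 | 1 => -1 | 2 => -1 | 3 => 1 | 4 => 1 | 5 => -1

/-- First solution of the exponent equations. -/
def K1 (a b : ℕ) : Fin 6 → ℕ
| 0 => a*b | 1 => b-1 | 2 => a-1 | 3 => 1 | 4 => 1 | 5 => 0

/-- Second solution of the exponent equations. -/
def K2 (a b : ℕ) : Fin 6 → ℕ
| 0 => a*b-1 | 1 => b | 2 => a | 3 => 0 | 4 => 0 | 5 => 1

lemma det_eq_sum :
    (Matrix.det (Matrix.of fun i j : Fin 3 =>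
      (MvPolynomial.X (i, j) : MvPolynomial (Fin 3 × Fin 3) ℤ)))
    = ∑ i : Fin 6, monomial (Dvec i) (Evec i) := by
  rw [Matrix.det_fin_three]
  simp only [Matrix.of_apply, Fin.sum_univ_six]
  have hX : ∀ p : Fin 3 × Fin 3, (X p : MvPolynomial (Fin 3 × Fin 3) ℤ)
      = monomial (Finsupp.single p 1) 1 := fun p => rfl
  simp only [hX, monomial_mul, Dvec, Evec]
  simp only [mul_one, map_neg]
  ring

lemma prod_pow_monomial (k : Fin 6 → ℕ) :
    (∏ i : Fin 6, (monomial (Dvec i) (Evec i) : MvPolynomial (Fin 3 × Fin 3) ℤ) ^ k i)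
      = monomial (∑ i : Fin 6, k i • Dvec i) (∏ i : Fin 6, Evec i ^ k i) := by
  simp only [Fin.prod_univ_six, Fin.sum_univ_six, monomial_pow, monomial_mul]

lemma coeff_pow (m : ℕ) (L : (Fin 3 × Fin 3) →₀ ℕ) :
    MvPolynomial.coeff L
      ((∑ i : Fin 6, (monomial (Dvec i) (Evec i) : MvPolynomial (Fin 3 × Fin 3) ℤ)) ^ m)
    = ∑ k ∈ piAntidiag (univ : Finset (Fin 6)) m,
        (Nat.multinomial univ k : ℤ) *
          (if (∑ i : Fin 6, k i • Dvec i) = L then ∏ i : Fin 6, Evec i ^ k i else 0) := by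
  rw [Finset.sum_pow_eq_sum_piAntidiag, MvPolynomial.coeff_sum]
  refine Finset.sum_congr rfl fun k _ => ?_
  rw [prod_pow_monomial]
  rw [show ((Nat.multinomial univ k : MvPolynomial (Fin 3 × Fin 3) ℤ))
      = C ((Nat.multinomial univ k : ℤ)) by rfl]
  rw [MvPolynomial.coeff_C_mul, MvPolynomial.coeff_monomial]

lemma eq_vec6 {v : Fin 6 → ℕ} {w : Fin 6 → ℕ} (h0 : v 0 = w 0) (h1 : v 1 = w 1)
    (h2 : v 2 = w 2) (h3 : v 3 = w 3) (h4 : v 4 = w 4) (h5 : v 5 = w 5) :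
    v = w := by
  funext i
  fin_cases i
  · exact h0
  · exact h1
  · exact h2
  · exact h3
  · exact h4
  · exact h5

lemma solve (a b : ℕ) (ha : 1 ≤ a) (hb : 1 ≤ b) (k : Fin 6 → ℕ)
    (h : (∑ i : Fin 6, k i • Dvec i)
      = Finsupp.equivFunOnFinite.symm fun p : Fin 3 × Fin 3 => L3 a b p.1 p.2) :
    k = K1 a b ∨ k = K2 a b := by
  have hp : ∀ p : Fin 3 × Fin 3, (∑ i : Fin 6, k i • Dvec i) p = L3 a b p.1 p.2 := by
    intro p; rw [h]; simp
  have h00 := hp (0,0); have h01 := hp (0,1); have h02 := hp (0,2)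
  have h10 := hp (1,0); have h11 := hp (1,1); have h12 := hp (1,2)
  have h20 := hp (2,0); have h21 := hp (2,1); have h22 := hp (2,2)
  simp [Dvec, Fin.sum_univ_six, Finsupp.single_apply, L3, Prod.ext_iff]
    at h00 h01 h02 h10 h11 h12 h20 h21 h22
  have H : (k 0 = a*b ∧ k 1 = b-1 ∧ k 2 = a-1 ∧ k 3 = 1 ∧ k 4 = 1 ∧ k 5 = 0) ∨
      (k 0 = a*b-1 ∧ k 1 = b ∧ k 2 = a ∧ k 3 = 0 ∧ k 4 = 0 ∧ k 5 = 1) := by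
    have hc : 1 ≤ a * b := Nat.one_le_iff_ne_zero.mpr (by positivity)
    generalize a * b = c at hc h00 h11 h22 ⊢
    omega
  rcases H with ⟨h0,h1,h2,h3,h4,h5⟩ | ⟨h0,h1,h2,h3,h4,h5⟩
  · exact Or.inl (eq_vec6 h0 h1 h2 h3 h4 h5)
  · exact Or.inr (eq_vec6 h0 h1 h2 h3 h4 h5)

lemma K1_sol (a b : ℕ) (ha : 1 ≤ a) (hb : 1 ≤ b) :
    (∑ i : Fin 6, K1 a b i • Dvec i)
      = Finsupp.equivFunOnFinite.symm fun p : Fin 3 × Fin 3 => L3 a b p.1 p.2 := by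
  ext p
  obtain ⟨i, j⟩ := p
  have hc : 1 ≤ a * b := Nat.one_le_iff_ne_zero.mpr (by positivity)
  fin_cases i <;> fin_cases j <;>
    simp [K1, Dvec, Fin.sum_univ_six, Finsupp.single_apply, L3, Prod.ext_iff] <;> omega

lemma K2_sol (a b : ℕ) (ha : 1 ≤ a) (hb : 1 ≤ b) :
    (∑ i : Fin 6, K2 a b i • Dvec i)
      = Finsupp.equivFunOnFinite.symm fun p : Fin 3 × Fin 3 => L3 a b p.1 p.2 := by
  ext p
  obtain ⟨i, j⟩ := p
  have hc : 1 ≤ a * b := Nat.one_le_iff_ne_zero.mpr (by positivity)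
  fin_cases i <;> fin_cases j <;>
    simp [K2, Dvec, Fin.sum_univ_six, Finsupp.single_apply, L3, Prod.ext_iff] <;> omega

lemma multinomial_eq (a b : ℕ) (ha : 1 ≤ a) (hb : 1 ≤ b) :
    Nat.multinomial univ (K1 a b) = Nat.multinomial univ (K2 a b) := by
  obtain ⟨a', rfl⟩ : ∃ a', a = a' + 1 := ⟨a - 1, by omega⟩
  obtain ⟨b', rfl⟩ : ∃ b', b = b' + 1 := ⟨b - 1, by omega⟩
  have h1 := Nat.multinomial_spec univ (K1 (a'+1) (b'+1))
  have h2 := Nat.multinomial_spec univ (K2 (a'+1) (b'+1))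
  have e1 : (a'+1) * (b'+1) = (a'*b' + a' + b') + 1 := by ring
  have e2 : (a'+1) * (b'+1) - 1 = a'*b' + a' + b' := by omega
  have hsum : ∑ i : Fin 6, K1 (a'+1) (b'+1) i = ∑ i : Fin 6, K2 (a'+1) (b'+1) i := by
    simp only [Fin.sum_univ_six, K1, K2, e1, e2]
    omega
  have hprod : (∏ i : Fin 6, Nat.factorial (K1 (a'+1) (b'+1) i))
      = ∏ i : Fin 6, Nat.factorial (K2 (a'+1) (b'+1) i) := by
    simp only [Fin.prod_univ_six, K1, K2]
    rw [e2, e1]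
    simp only [Nat.factorial_succ, Nat.add_sub_cancel, Nat.factorial_zero, Nat.factorial_one]
    ring
  have hpos : 0 < ∏ i : Fin 6, Nat.factorial (K1 (a'+1) (b'+1) i) :=
    Finset.prod_pos fun i _ => Nat.factorial_pos _
  apply Nat.eq_of_mul_eq_mul_left hpos
  rw [h1, hprod, h2, hsum]

theorem coeff_L3_eq_zero (a b : ℕ) (ha : 1 ≤ a) (hb : 1 ≤ b)
    (m : ℕ) (hm : m = a * b + a + b) :
    coeffC 3 m (L3 a b) = 0 := by
  have hc : 1 ≤ a * b := Nat.one_le_iff_ne_zero.mpr (by positivity)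
  rw [coeffC, det_eq_sum, coeff_pow]
  have hK1mem : K1 a b ∈ piAntidiag (univ : Finset (Fin 6)) m := by
    rw [Finset.mem_piAntidiag]
    refine ⟨?_, fun i _ => Finset.mem_univ i⟩
    simp only [Fin.sum_univ_six, K1]
    omega
  have hK2mem : K2 a b ∈ piAntidiag (univ : Finset (Fin 6)) m := by
    rw [Finset.mem_piAntidiag]
    refine ⟨?_, fun i _ => Finset.mem_univ i⟩
    simp only [Fin.sum_univ_six, K2]
    omega
  have hne : K1 a b ≠ K2 a b := by
    intro h
    have := congrFun h 3
    simp [K1, K2] at this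
  have hsub : ({K1 a b, K2 a b} : Finset (Fin 6 → ℕ)) ⊆ piAntidiag univ m := by
    intro k hk
    rcases Finset.mem_insert.1 hk with rfl | hk
    · exact hK1mem
    · rw [Finset.mem_singleton.1 hk]; exact hK2mem
  have hzero : ∀ k ∈ piAntidiag (univ : Finset (Fin 6)) m,
      k ∉ ({K1 a b, K2 a b} : Finset (Fin 6 → ℕ)) →
      (Nat.multinomial univ k : ℤ) *
        (if (∑ i : Fin 6, k i • Dvec i)
            = Finsupp.equivFunOnFinite.symm (fun p : Fin 3 × Fin 3 => L3 a b p.1 p.2)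
          then ∏ i : Fin 6, Evec i ^ k i else 0) = 0 := by
    intro k _ hknot
    rw [if_neg, mul_zero]
    intro hsol
    refine hknot ?_
    rcases solve a b ha hb k hsol with rfl | rfl
    · exact Finset.mem_insert_self _ _
    · exact Finset.mem_insert_of_mem (Finset.mem_singleton_self _)
  rw [← Finset.sum_subset hsub hzero, Finset.sum_pair hne,
    if_pos (K1_sol a b ha hb), if_pos (K2_sol a b ha hb), multinomial_eq a b ha hb]
  simp only [Fin.prod_univ_six, Evec, K1, K2]
  obtain ⟨a', rfl⟩ : ∃ a', a = a' + 1 := ⟨a - 1, by omega⟩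
  obtain ⟨b', rfl⟩ : ∃ b', b = b' + 1 := ⟨b - 1, by omega⟩
  simp only [Nat.add_sub_cancel]
  ring
end

section
/- Let n ≥ 3, let a, b ≥ 1 be natural numbers, set m = ab + a + b, and let L_n(a,b) be the n×n matrix whose upper-left 3×3 block is L_3(a,b) = [[ab+b-1, a, 1], [a, ab, b], [1, b, ab+a-1]], whose remaining diagonal entries equal m, and whose other entries are 0. If σ₁, …, σ_m are permutations of {1,…,n} such that ∏_{i=1}^{m} x_{1σᵢ(1)} x_{2σᵢ(2)} ⋯ x_{nσᵢ(n)} = x^{L_n(a,b)}, then every σᵢ fixes each point k with 4 ≤ k ≤ n. -/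
open MvPolynomial Finsupp

lemma prod_monomial_one {ι τ : Type*} (s : Finset ι) (g : ι → (τ →₀ ℕ)) :
    ∏ i ∈ s, (monomial (g i) (1 : ℤ)) = monomial (∑ i ∈ s, g i) 1 := by
  induction s using Finset.cons_induction with
  | empty => simp [monomial_zero']
  | cons a s ha ih => simp [Finset.prod_cons, Finset.sum_cons, ih, monomial_mul]

lemma prod_X_pow {ι τ : Type*} (s : Finset ι) (f : ι → τ) (e : ι → ℕ) :
    ∏ i ∈ s, (X (f i) : MvPolynomial τ ℤ) ^ e i
      = monomial (∑ i ∈ s, Finsupp.single (f i) (e i)) 1 := by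
  rw [← prod_monomial_one]
  exact Finset.prod_congr rfl fun i _ => X_pow_eq_monomial

/-- If the product over `i = 1, …, m` of the diagonal monomials
`x_{1 σᵢ(1)} x_{2 σᵢ(2)} ⋯ x_{n σᵢ(n)}` equals the monomial `x^{L_n(a,b)}`,
then every `σᵢ` fixes each point `k` with `4 ≤ k ≤ n`
(in 0-indexed terms, each `k : Fin n` with `3 ≤ (k : ℕ)`). -/

theorem perms_fix_tail (n a b : ℕ) (hn : 3 ≤ n) (ha : 1 ≤ a) (hb : 1 ≤ b)
    (m : ℕ) (hm : m = a * b + a + b)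
    (σ : Fin m → Equiv.Perm (Fin n))
    (hprod : (∏ i : Fin m, ∏ r : Fin n,
        (MvPolynomial.X (r, σ i r) : MvPolynomial (Fin n × Fin n) ℤ))
      = ∏ p : Fin n × Fin n,
          (MvPolynomial.X p : MvPolynomial (Fin n × Fin n) ℤ) ^ (Lmat n a b p.1 p.2)) :
    ∀ i : Fin m, ∀ k : Fin n, 3 ≤ (k : ℕ) → σ i k = k := by
  intro i k hk
  by_contra hne
  -- rewrite both sides as monomials
  have hL : (∏ i : Fin m, ∏ r : Fin n,
        (MvPolynomial.X (r, σ i r) : MvPolynomial (Fin n × Fin n) ℤ))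
      = monomial (∑ i : Fin m, ∑ r : Fin n, Finsupp.single (r, σ i r) 1) 1 := by
    rw [← prod_monomial_one]
    refine Finset.prod_congr rfl fun j _ => ?_
    simpa using prod_X_pow (Finset.univ : Finset (Fin n)) (fun r => (r, σ j r)) (fun _ => 1)
  have hR : (∏ p : Fin n × Fin n,
        (MvPolynomial.X p : MvPolynomial (Fin n × Fin n) ℤ) ^ (Lmat n a b p.1 p.2))
      = monomial (∑ p : Fin n × Fin n, Finsupp.single p (Lmat n a b p.1 p.2)) 1 :=
    prod_X_pow _ _ _
  rw [hL, hR, monomial_eq_monomial_iff] at hprod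
  rcases hprod with ⟨hS, -⟩ | ⟨h1, -⟩
  · -- evaluate the Finsupp equality at (k, σ i k)
    have := DFunLike.congr_fun hS (k, σ i k)
    simp only [Finsupp.coe_finset_sum, Finset.sum_apply] at this
    have hRHS : ∑ p : Fin n × Fin n,
        (Finsupp.single p (Lmat n a b p.1 p.2)) (k, σ i k) = 0 := by
      rw [Finset.sum_eq_zero]
      intro p _
      rcases eq_or_ne p (k, σ i k) with rfl | hp
      · rw [Finsupp.single_eq_same]
        simp only [Lmat]
        rw [dif_neg (by simp; omega), if_neg (by simpa using fun h => hne h.symm)]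
      · exact Finsupp.single_eq_of_ne' hp
    rw [hRHS] at this
    have h0 := (Finset.sum_eq_zero_iff).mp this i (Finset.mem_univ i)
    have h0' := (Finset.sum_eq_zero_iff).mp h0 k (Finset.mem_univ k)
    simp at h0'
  · exact one_ne_zero h1
end
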